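/- Let G be a finite undirected graph with disjoint vertex sets S and T, and let Z_1,...,Z_k be the drainage of (G,S,T). Then the cuts Z_i are pairwise disjoint edge sets, and the source-side reachable sets are strictly nested: R(Z_i,S) ⊊ R(Z_{i+1},S) for all 1 ≤ i ≤ k-1. -/

import Mathlib

open SimpleGraph

variable {V : Type*}

/-- `X` is an edge `(S,T)`-cut: after deleting the edges of `X`,
no vertex of `S` can reach a vertex of `T`. -/
def EdgeCut (G : SimpleGraph V) (S T : Set V) (X : Finset (Sym2 V)) : Prop :=
  ∀ s ∈ S, ∀ t ∈ T, ¬ (G.deleteEdges ↑X).Reachable s t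

/-- `X` is a minimum edge `(S,T)`-cut. -/
def MinEdgeCut (G : SimpleGraph V) (S T : Set V) (X : Finset (Sym2 V)) : Prop :=
  EdgeCut G S T X ∧ ∀ Y : Finset (Sym2 V), EdgeCut G S T Y → X.card ≤ Y.card

/-- `R(X,S)`: vertices reachable from `S` in `G` deprived of the edges of `X`. -/
def Rside (G : SimpleGraph V) (X : Finset (Sym2 V)) (S : Set V) : Set V :=
  {v | ∃ s ∈ S, (G.deleteEdges ↑X).Reachable s v}

/-- A minimum closest `(S,T)`-cut: a minimum cut `Z` such that no other cut `X'`
satisfies `|X'| ≤ |Z|` and `R(X',S) ⊆ R(Z,S)`. -/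
def MinClosestCut (G : SimpleGraph V) (S T : Set V) (Z : Finset (Sym2 V)) : Prop :=
  MinEdgeCut G S T Z ∧
    ∀ X' : Finset (Sym2 V), EdgeCut G S T X' → X' ≠ Z →
      ¬ (X'.card ≤ Z.card ∧ Rside G X' S ⊆ Rside G Z S)

/-- `G` deprived of the vertex set `U` (kept on the same vertex type). -/
def deprive (G : SimpleGraph V) (U : Set V) : SimpleGraph V where
  Adj u v := G.Adj u v ∧ u ∉ U ∧ v ∉ U
  symm := ⟨fun _ _ ⟨h, hu, hv⟩ => ⟨h.symm, hv, hu⟩⟩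
  loopless := ⟨fun u ⟨h, _, _⟩ => G.irrefl h⟩

/-- `V^T(Z)` relative to sources `S`: the endpoints of edges of `Z` that are not
reachable from `S` once `Z` is removed. -/
def nextSources (G : SimpleGraph V) (Z : Finset (Sym2 V)) (S : Set V) : Set V :=
  {v | v ∉ Rside G Z S ∧ ∃ u, s(u, v) ∈ Z}

/-- The drainage `Z 1, ..., Z k` of the instance `(G,S,T)` with minimum cut size `p`:
`Z 1` is the minimum closest `(S,T)`-cut, and `Z (i+1)` is the minimum closest
`(S_{i+1},T)`-cut of size `p` in `G` deprived of `R(Z i, S)`; the construction stops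
at `k`, when no further cut of size `p` exists. -/
def IsDrainage (G : SimpleGraph V) (S T : Set V) (p k : ℕ)
    (Z : ℕ → Finset (Sym2 V)) : Prop :=
  1 ≤ k ∧
  MinClosestCut G S T (Z 1) ∧ (Z 1).card = p ∧
  (∀ i, 1 ≤ i → i < k →
    MinClosestCut (deprive G (Rside G (Z i) S)) (nextSources G (Z i) S) T (Z (i + 1)) ∧
      (Z (i + 1)).card = p) ∧
  (∀ X : Finset (Sym2 V),
    EdgeCut (deprive G (Rside G (Z k) S)) (nextSources G (Z k) S) T X → p < X.card)

section Helpers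

variable {G : SimpleGraph V} {X : Finset (Sym2 V)} {S : Set V}

lemma deprive_adj {G : SimpleGraph V} {U : Set V} {u v : V} :
    (deprive G U).Adj u v ↔ G.Adj u v ∧ u ∉ U ∧ v ∉ U := Iff.rfl

lemma mem_rside {s : V} (hs : s ∈ S) : s ∈ Rside G X S :=
  ⟨s, hs, Reachable.refl s⟩

lemma rside_adj {v w : V} (hv : v ∈ Rside G X S)
    (h : (G.deleteEdges ↑X).Adj v w) : w ∈ Rside G X S := by
  obtain ⟨s, hs, hr⟩ := hv
  exact ⟨s, hs, hr.trans h.reachable⟩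

lemma rside_subset_closed {H : SimpleGraph V} {C : Set V}
    (hS : S ⊆ C) (hcl : ∀ v w, v ∈ C → (H.deleteEdges ↑X).Adj v w → w ∈ C) :
    Rside H X S ⊆ C := by
  have key : ∀ {a b : V}, (H.deleteEdges ↑X).Walk a b → a ∈ C → b ∈ C := by
    intro a b w
    induction w with
    | nil => exact id
    | cons h p ih => exact fun ha => ih (hcl _ _ ha h)
  rintro v ⟨s, hs, ⟨w⟩⟩
  exact key w (hS hs)

lemma mincut_cross {G : SimpleGraph V} {S T : Set V} {W : Finset (Sym2 V)}
    (h : MinEdgeCut G S T W) {a b : V} (hab : s(a, b) ∈ W) :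
    G.Adj a b ∧ (a ∈ Rside G W S ↔ b ∉ Rside G W S) := by
  classical
  have hkey : ¬ (∀ v w : V, v ∈ Rside G W S → G.Adj v w → s(v, w) = s(a, b) →
      w ∈ Rside G W S) := by
    intro hcl
    have hcut : EdgeCut G S T (W.erase s(a, b)) := by
      intro s hs t ht hr
      have hsub : Rside G (W.erase s(a, b)) S ⊆ Rside G W S := by
        refine rside_subset_closed (fun x hx => mem_rside hx) ?_
        intro v w hv hadj
        rw [SimpleGraph.deleteEdges_adj] at hadj
        obtain ⟨hG, hne⟩ := hadj
        by_cases hW : s(v, w) ∈ W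
        · have heq : s(v, w) = s(a, b) := by
            by_contra hne'
            exact hne (Finset.mem_coe.mpr (Finset.mem_erase.mpr ⟨hne', hW⟩))
          exact hcl v w hv hG heq
        · exact rside_adj hv (SimpleGraph.deleteEdges_adj.mpr ⟨hG, by simpa using hW⟩)
      have ht' : t ∈ Rside G W S := hsub ⟨s, hs, hr⟩
      obtain ⟨s', hs', hr'⟩ := ht'
      exact h.1 s' hs' t ht hr'
    have hle := h.2 _ hcut
    have hlt := Finset.card_erase_lt_of_mem hab
    omega
  have hAdj : G.Adj a b := by
    by_contra hno
    apply hkey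
    intro v w _ hG heq
    rcases Sym2.eq_iff.mp heq with ⟨rfl, rfl⟩ | ⟨rfl, rfl⟩
    · exact absurd hG hno
    · exact absurd hG.symm hno
  refine ⟨hAdj, ?_⟩
  have h1 : ¬ (a ∈ Rside G W S ∧ b ∈ Rside G W S) := by
    rintro ⟨ha, hb⟩
    apply hkey
    intro v w _ _ heq
    rcases Sym2.eq_iff.mp heq with ⟨rfl, rfl⟩ | ⟨rfl, rfl⟩
    · exact hb
    · exact ha
  have h2 : a ∈ Rside G W S ∨ b ∈ Rside G W S := by
    by_contra hno
    push_neg at hno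
    apply hkey
    intro v w hv _ heq
    rcases Sym2.eq_iff.mp heq with ⟨rfl, rfl⟩ | ⟨rfl, rfl⟩
    · exact absurd hv hno.1
    · exact absurd hv hno.2
  tauto

end Helpers

/-- The drainage cuts are pairwise disjoint edge sets and their
source-side reachable sets are strictly nested. -/
theorem drainage_disjoint_and_nested
    [Fintype V] (G : SimpleGraph V) (S T : Set V) (hST : Disjoint S T)
    (p k : ℕ) (Z : ℕ → Finset (Sym2 V)) (hZ : IsDrainage G S T p k Z) :
    (∀ i j, 1 ≤ i → i < j → j ≤ k → Disjoint (Z i) (Z j)) ∧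
    (∀ i, 1 ≤ i → i < k → Rside G (Z i) S ⊂ Rside G (Z (i + 1)) S) := by
  classical
  obtain ⟨hk1, hMC1, hcard1, hstep, hstop⟩ := hZ
  -- all cuts have cardinality p
  have hcard : ∀ i, 1 ≤ i → i ≤ k → (Z i).card = p := by
    intro i h1 h2
    obtain _ | _ | j := i
    · omega
    · exact hcard1
    · exact (hstep (j + 1) (by omega) (by omega)).2
  -- p is positive
  have hp : 1 ≤ p := by
    by_contra hp0
    have hzk : Z k = ∅ := Finset.card_eq_zero.mp (by rw [hcard k hk1 le_rfl]; omega)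
    have hcut : EdgeCut (deprive G (Rside G (Z k) S)) (nextSources G (Z k) S) T ∅ := by
      intro s hs
      exact absurd hs.2 (by simp [hzk])
    have := hstop ∅ hcut
    rw [Finset.card_empty] at this
    omega
  have hZne : ∀ i, 1 ≤ i → i ≤ k → (Z i).Nonempty := by
    intro i h1 h2
    exact Finset.card_pos.mp (by rw [hcard i h1 h2]; omega)
  -- edges of `Z (i+1)` are edges of `G` with both endpoints outside `R(Z i, S)`
  have c1 : ∀ i, 1 ≤ i → i < k → ∀ a b, s(a, b) ∈ Z (i + 1) →
      G.Adj a b ∧ a ∉ Rside G (Z i) S ∧ b ∉ Rside G (Z i) S := by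
    intro i h1 h2 a b hab
    exact deprive_adj.mp (mincut_cross (hstep i h1 h2).1.1 hab).1
  -- monotonicity of the reachable sets
  have mono : ∀ i, 1 ≤ i → i < k → Rside G (Z i) S ⊆ Rside G (Z (i + 1)) S := by
    intro i h1 h2
    have hsub : Rside G (Z i) S ⊆ Rside G (Z i) S ∩ Rside G (Z (i + 1)) S := by
      refine rside_subset_closed (fun s hs => ⟨mem_rside hs, mem_rside hs⟩) ?_
      rintro v w ⟨hv1, hv2⟩ hadj
      refine ⟨rside_adj hv1 hadj, ?_⟩
      rw [SimpleGraph.deleteEdges_adj] at hadj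
      have hnz : s(v, w) ∉ Z (i + 1) := fun hmem => (c1 i h1 h2 v w hmem).2.1 hv1
      exact rside_adj hv2 (SimpleGraph.deleteEdges_adj.mpr ⟨hadj.1, by simpa using hnz⟩)
    exact fun v hv => (hsub hv).2
  -- crossing property with respect to the global reachable sets
  have P1 : ∀ i, 1 ≤ i → i ≤ k → ∀ a b, s(a, b) ∈ Z i →
      G.Adj a b ∧ (a ∈ Rside G (Z i) S ↔ b ∉ Rside G (Z i) S) := by
    intro i h1
    induction i, h1 using Nat.le_induction with
    | base => exact fun _ a b hab => mincut_cross hMC1.1 hab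
    | succ i hi ih =>
      intro hik a b hab
      have hik' : i < k := hik
      have ihP := ih (le_of_lt hik')
      have hcr := mincut_cross (hstep i hi hik').1.1 hab
      obtain ⟨hadj, hcross⟩ := hcr
      rw [deprive_adj] at hadj
      obtain ⟨hG, haR, hbR⟩ := hadj
      refine ⟨hG, ?_⟩
      set D := deprive G (Rside G (Z i) S) with hD
      set NS := nextSources G (Z i) S with hNS
      set L := Rside D (Z (i + 1)) NS with hL
      have hLsub : L ⊆ Rside G (Z (i + 1)) S := by
        refine rside_subset_closed ?_ ?_
        · rintro v ⟨hvR, u, huv⟩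
          have hcr' := ihP u v huv
          have huRi : u ∈ Rside G (Z i) S := hcr'.2.mpr hvR
          have huR1 : u ∈ Rside G (Z (i + 1)) S := mono i hi hik' huRi
          have hnz : s(u, v) ∉ Z (i + 1) := fun hm => (c1 i hi hik' u v hm).2.1 huRi
          exact rside_adj huR1 (SimpleGraph.deleteEdges_adj.mpr ⟨hcr'.1, by simpa using hnz⟩)
        · intro v w hv hadj'
          rw [SimpleGraph.deleteEdges_adj] at hadj'
          obtain ⟨hDvw, hnz⟩ := hadj'
          rw [hD, deprive_adj] at hDvw
          exact rside_adj hv (SimpleGraph.deleteEdges_adj.mpr ⟨hDvw.1, hnz⟩)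
      have hsup : Rside G (Z (i + 1)) S ⊆ Rside G (Z i) S ∪ L := by
        refine rside_subset_closed (fun s hs => Or.inl (mem_rside hs)) ?_
        intro v w hv hadj'
        rw [SimpleGraph.deleteEdges_adj] at hadj'
        obtain ⟨hG', hnz1⟩ := hadj'
        by_cases hvRi : v ∈ Rside G (Z i) S
        · by_cases hwz : s(v, w) ∈ Z i
          · have hcr' := ihP v w hwz
            have hwRi : w ∉ Rside G (Z i) S := hcr'.2.mp hvRi
            exact Or.inr (mem_rside ⟨hwRi, v, hwz⟩)
          · exact Or.inl (rside_adj hvRi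
              (SimpleGraph.deleteEdges_adj.mpr ⟨hG', by simpa using hwz⟩))
        · have hvL : v ∈ L := hv.resolve_left hvRi
          by_cases hwRi : w ∈ Rside G (Z i) S
          · exact Or.inl hwRi
          · refine Or.inr (rside_adj hvL (SimpleGraph.deleteEdges_adj.mpr ⟨?_, hnz1⟩))
            rw [hD, deprive_adj]
            exact ⟨hG', hvRi, hwRi⟩
      have hc3 : Rside G (Z (i + 1)) S = Rside G (Z i) S ∪ L :=
        Set.Subset.antisymm hsup (Set.union_subset (mono i hi hik') hLsub)
      have key : ∀ x, x ∉ Rside G (Z i) S →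
          (x ∈ Rside G (Z (i + 1)) S ↔ x ∈ L) := by
        intro x hx
        rw [hc3]
        simp [Set.mem_union, hx]
      rw [key a haR, key b hbR]
      exact hcross
  -- monotone chain
  have monoLe : ∀ j, j ≤ k → ∀ i, 1 ≤ i → i ≤ j →
      Rside G (Z i) S ⊆ Rside G (Z j) S := by
    intro j
    induction j with
    | zero => intro _ i h1 h2; omega
    | succ n ih =>
      intro hjk i h1 h2
      rcases Nat.lt_or_ge i (n + 1) with h | h
      · exact (ih (by omega) i h1 (by omega)).trans (mono n (by omega) (by omega))
      · have : i = n + 1 := by omega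
        subst this
        exact subset_rfl
  constructor
  · -- disjointness
    intro i j h1 hij hjk
    rw [Finset.disjoint_left]
    intro e hei hej
    induction e using Sym2.ind with
    | _ a b =>
      have hcr := P1 i h1 (by omega) a b hei
      obtain ⟨j', rfl⟩ : ∃ j', j = j' + 1 := ⟨j - 1, by omega⟩
      have hc1 := c1 j' (by omega) (by omega) a b hej
      have hmono := monoLe j' (by omega) i h1 (by omega)
      rcases Classical.em (a ∈ Rside G (Z i) S) with ha | ha
      · exact hc1.2.1 (hmono ha)
      · have hb : b ∈ Rside G (Z i) S := by
          by_contra hb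
          exact ha (hcr.2.mpr hb)
        exact hc1.2.2 (hmono hb)
  · -- strict nesting
    intro i h1 hik
    rw [Set.ssubset_def]
    refine ⟨mono i h1 hik, ?_⟩
    intro hsub
    obtain ⟨e, he⟩ := hZne i h1 (le_of_lt hik)
    induction e using Sym2.ind with
    | _ a b =>
      have hcr := P1 i h1 (le_of_lt hik) a b he
      rcases Classical.em (a ∈ Rside G (Z i) S) with ha | ha
      · have hb : b ∉ Rside G (Z i) S := hcr.2.mp ha
        have hnz : s(a, b) ∉ Z (i + 1) := fun hm => (c1 i h1 hik a b hm).2.1 ha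
        have hbmem : b ∈ Rside G (Z (i + 1)) S :=
          rside_adj (mono i h1 hik ha)
            (SimpleGraph.deleteEdges_adj.mpr ⟨hcr.1, by simpa using hnz⟩)
        exact hb (hsub hbmem)
      · have hb : b ∈ Rside G (Z i) S := by
          by_contra hb
          exact ha (hcr.2.mpr hb)
        have hnz : s(b, a) ∉ Z (i + 1) := fun hm => (c1 i h1 hik b a hm).2.1 hb
        have hamem : a ∈ Rside G (Z (i + 1)) S :=
          rside_adj (mono i h1 hik hb)
            (SimpleGraph.deleteEdges_adj.mpr ⟨hcr.1.symm, by simpa using hnz⟩)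
        exact ha (hsub hamem)
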